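/- Let ρ, κ > 0 and let m(v,w) = (2π/√(ρκ)) exp((ρ v² + κ w²)/2) on ℝ². Then every function ν : ℝ² → ℝ possessing a weak derivative ∂_w ν and satisfying ∫_{ℝ²} (|ν|² + |∂_w ν|²) m du < +∞ obeys the two inequalities: ‖ν‖_{L²(m)} ≤ κ^{−1/2} ‖∂_w ν‖_{L²(m)} and ‖w ν‖_{L²(m)} ≤ (2/κ) ‖∂_w ν‖_{L²(m)}. -/

import Mathlib

open MeasureTheory Real Filter Set

noncomputable section

/-- The weight `m(v,w) = (2π/√(ρκ)) exp((ρv² + κw²)/2)`. -/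
noncomputable def weightM (ρ κ : ℝ) (u : ℝ × ℝ) : ℝ :=
  (2 * Real.pi / Real.sqrt (ρ * κ)) * Real.exp ((ρ * u.1 ^ 2 + κ * u.2 ^ 2) / 2)

/-- For a nonnegative integrable function `s`, there is a sequence `R n → ∞` with
`R n * s (R n) → 0` and `R n ≥ 1`. -/
lemma exists_boundary_seq (s : ℝ → ℝ) (hs : Integrable s) (hnn : ∀ w, 0 ≤ s w) :
    ∃ R : ℕ → ℝ, (∀ n, 1 ≤ R n) ∧ Tendsto R atTop atTop ∧
      Tendsto (fun n => R n * s (R n)) atTop (nhds 0) := by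
  have key : ∀ n : ℕ, ∃ r : ℝ, (n : ℝ) + 1 ≤ r ∧ r * s r < 1 / ((n : ℝ) + 1) := by
    intro n
    by_contra hcon
    push_neg at hcon
    have hpos : (0 : ℝ) < (n : ℝ) + 1 := by positivity
    have hint : IntegrableOn (fun x : ℝ => x⁻¹) (Ioi ((n : ℝ) + 1)) := by
      have hs' : IntegrableOn (fun x => ((n : ℝ) + 1) * s x) (Ioi ((n : ℝ) + 1)) :=
        (hs.integrableOn.const_mul _)
      refine hs'.mono' measurable_inv.aestronglyMeasurable ?_
      filter_upwards [ae_restrict_mem measurableSet_Ioi] with x hx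
      have hx1 : (n : ℝ) + 1 ≤ x := (le_of_lt hx)
      have hx0 : 0 < x := lt_of_lt_of_le hpos hx1
      have h1 : 1 / ((n : ℝ) + 1) ≤ x * s x := hcon x hx1
      rw [Real.norm_eq_abs, abs_of_nonneg (inv_nonneg.2 hx0.le)]
      -- x⁻¹ ≤ (n+1) * s x
      rw [inv_le_iff_one_le_mul₀ hx0]
      calc (1:ℝ) = ((n:ℝ)+1) * (1 / ((n:ℝ)+1)) := by field_simp
        _ ≤ ((n:ℝ)+1) * (x * s x) := by
            exact mul_le_mul_of_nonneg_left h1 hpos.le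
        _ = ((n:ℝ)+1) * s x * x := by ring
    exact not_IntegrableOn_Ioi_inv hint
  choose R hR1 hR2 using key
  refine ⟨R, fun n => le_trans (by norm_num) (hR1 n), ?_, ?_⟩
  · apply tendsto_atTop_mono (fun n => hR1 n)
    exact tendsto_atTop_add_const_right _ 1 tendsto_natCast_atTop_atTop
  · apply squeeze_zero (fun n => mul_nonneg (le_trans (by positivity) (hR1 n)) (hnn _))
      (fun n => (hR2 n).le)
    exact tendsto_one_div_add_atTop_nhds_zero_nat

/-- 1-D Poincaré-type inequality with weight `exp (κ w² / 2)`. -/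
lemma oneD {κ : ℝ} (hκ : 0 < κ) (g : ℝ → ℝ) (hg : Differentiable ℝ g)
    (hIg : Integrable (fun w => g w ^ 2 * Real.exp (κ * w ^ 2 / 2)))
    (hIg' : Integrable (fun w => deriv g w ^ 2 * Real.exp (κ * w ^ 2 / 2))) :
    (κ * ∫ w, g w ^ 2 * Real.exp (κ * w ^ 2 / 2)
        ≤ ∫ w, deriv g w ^ 2 * Real.exp (κ * w ^ 2 / 2)) ∧
    Integrable (fun w => w ^ 2 * g w ^ 2 * Real.exp (κ * w ^ 2 / 2)) ∧
    κ ^ 2 * ∫ w, w ^ 2 * g w ^ 2 * Real.exp (κ * w ^ 2 / 2)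
        ≤ 4 * ∫ w, deriv g w ^ 2 * Real.exp (κ * w ^ 2 / 2) := by
  set E : ℝ → ℝ := fun w => Real.exp (κ * w ^ 2 / 2) with hE
  have hE1 : ∀ w, 1 ≤ E w := fun w => Real.one_le_exp (by positivity)
  have hEpos : ∀ w, 0 < E w := fun w => Real.exp_pos _
  have hEcont : Continuous E := by continuity
  have hgc : Continuous g := hg.continuous
  have hg'meas : Measurable (deriv g) := measurable_deriv g
  -- derivative of E
  have hEderiv : ∀ w, HasDerivAt E (κ * w * E w) w := by
    intro w
    have h1 : HasDerivAt (fun w : ℝ => κ * w ^ 2 / 2) (κ * w) w := by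
      have := ((hasDerivAt_pow 2 w).const_mul κ).div_const 2
      exact this.congr_deriv (by rw [show (2:ℕ) - 1 = 1 from rfl]; push_cast; ring)
    simpa [mul_comm] using h1.exp
  -- derivative of h = g² E
  set h : ℝ → ℝ := fun w => g w ^ 2 * E w with hh
  have hhderiv : ∀ w, HasDerivAt h ((2 * g w * deriv g w + κ * w * g w ^ 2) * E w) w := by
    intro w
    have h1 : HasDerivAt (fun w => g w ^ 2) (2 * g w * deriv g w) w := by
      have := ((hg w).hasDerivAt).pow 2
      exact this.congr_deriv (by rw [show (2:ℕ) - 1 = 1 from rfl]; push_cast; ring)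
    have := h1.mul (hEderiv w)
    exact this.congr_deriv (by ring)
  have hhnn : ∀ w, 0 ≤ h w := fun w => mul_nonneg (sq_nonneg _) (hEpos w).le
  -- interval integrability of products with deriv g
  have key : ∀ (R : ℝ), 0 ≤ R → ∀ (c : ℝ → ℝ), Continuous c →
      IntervalIntegrable (fun w => c w * deriv g w) volume (-R) R := by
    intro R hR c hc
    rw [intervalIntegrable_iff_integrableOn_Ioc_of_le (by linarith)]
    obtain ⟨M, hM⟩ := (isCompact_Icc (a := -R) (b := R)).exists_bound_of_continuousOn
      hc.continuousOn
    have hbound : IntegrableOn (fun w => M * (deriv g w ^ 2 * E w + 1)) (Ioc (-R) R) := by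
      refine Integrable.const_mul ?_ M
      exact (hIg'.integrableOn.add (integrableOn_const measure_Ioc_lt_top.ne))
    refine hbound.mono' ((hc.measurable.mul hg'meas).aestronglyMeasurable) ?_
    filter_upwards [ae_restrict_mem measurableSet_Ioc] with x hx
    have hcx : ‖c x‖ ≤ M := hM x (Ioc_subset_Icc_self hx)
    have hM0 : 0 ≤ M := le_trans (norm_nonneg _) hcx
    have h1 : |deriv g x| ≤ deriv g x ^ 2 * E x + 1 := by
      nlinarith [sq_nonneg (|deriv g x| - 1), hE1 x, sq_nonneg (deriv g x),
        abs_nonneg (deriv g x), sq_abs (deriv g x)]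
    calc ‖c x * deriv g x‖ = ‖c x‖ * |deriv g x| := by
          rw [norm_mul]; rfl
      _ ≤ M * (deriv g x ^ 2 * E x + 1) := by
          apply mul_le_mul hcx h1 (abs_nonneg _) hM0
  -- per-R inequalities
  have main : ∀ R : ℝ, 0 ≤ R →
      κ * (∫ w in (-R)..R, g w ^ 2 * E w)
        ≤ (∫ w, deriv g w ^ 2 * E w) + κ * (R * (h R + h (-R))) ∧
      κ ^ 2 * (∫ w in (-R)..R, w ^ 2 * g w ^ 2 * E w)
        ≤ 4 * (∫ w, deriv g w ^ 2 * E w) + 2 * κ * (R * (h R + h (-R))) := by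
    intro R hR
    have hRR : -R ≤ R := by linarith
    set A : ℝ := ∫ w, deriv g w ^ 2 * E w with hA
    set J : ℝ := ∫ w in (-R)..R, g w ^ 2 * E w with hJ
    set B : ℝ := ∫ w in (-R)..R, w ^ 2 * g w ^ 2 * E w with hB
    set T : ℝ := ∫ w in (-R)..R, (w * g w * E w) * deriv g w with hT
    set AR : ℝ := ∫ w in (-R)..R, deriv g w ^ 2 * E w with hAR
    have iJ : IntervalIntegrable (fun w => g w ^ 2 * E w) volume (-R) R :=
      ((hgc.pow 2).mul hEcont).intervalIntegrable _ _
    have iB : IntervalIntegrable (fun w => w ^ 2 * g w ^ 2 * E w) volume (-R) R :=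
      (((continuous_pow 2).mul (hgc.pow 2)).mul hEcont).intervalIntegrable _ _
    have iA : IntervalIntegrable (fun w => deriv g w ^ 2 * E w) volume (-R) R :=
      hIg'.intervalIntegrable
    have iT : IntervalIntegrable (fun w => (w * g w * E w) * deriv g w) volume (-R) R :=
      key R hR _ ((continuous_id.mul hgc).mul hEcont)
    -- FTC
    have hq : ∀ w : ℝ, HasDerivAt (fun w => w * h w)
        (g w ^ 2 * E w + (2 * ((w * g w * E w) * deriv g w) + κ * (w ^ 2 * g w ^ 2 * E w))) w := by
      intro w
      have := (hasDerivAt_id w).mul (hhderiv w)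
      exact this.congr_deriv (by simp only [h, id_eq]; ring)
    have hint : IntervalIntegrable (fun w => g w ^ 2 * E w +
        (2 * ((w * g w * E w) * deriv g w) + κ * (w ^ 2 * g w ^ 2 * E w))) volume (-R) R :=
      iJ.add ((iT.const_mul 2).add (iB.const_mul κ))
    have hftc := intervalIntegral.integral_eq_sub_of_hasDerivAt
      (f := fun w => w * h w) (fun x _ => hq x) hint
    have eqmain : J + (2 * T + κ * B) = R * (h R + h (-R)) := by
      rw [hJ, hT, hB, ← intervalIntegral.integral_const_mul,
        ← intervalIntegral.integral_const_mul,
        ← intervalIntegral.integral_add (iT.const_mul 2) (iB.const_mul κ),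
        ← intervalIntegral.integral_add iJ ((iT.const_mul 2).add (iB.const_mul κ)), hftc]
      ring
    -- nonnegativity of the square integral and its expansion
    have hPnn : (0:ℝ) ≤ ∫ w in (-R)..R, (deriv g w + κ * w * g w) ^ 2 * E w :=
      intervalIntegral.integral_nonneg hRR (fun u _ => by positivity)
    have hPexp : (∫ w in (-R)..R, (deriv g w + κ * w * g w) ^ 2 * E w)
        = AR + (2 * κ * T + κ ^ 2 * B) := by
      rw [hAR, hT, hB, ← intervalIntegral.integral_const_mul,
        ← intervalIntegral.integral_const_mul,
        ← intervalIntegral.integral_add (iT.const_mul (2*κ)) (iB.const_mul (κ^2)),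
        ← intervalIntegral.integral_add iA ((iT.const_mul (2*κ)).add (iB.const_mul (κ^2)))]
      congr 1
      funext w
      ring
    have hAle : AR ≤ A := by
      rw [hAR, hA, intervalIntegral.integral_of_le hRR]
      exact setIntegral_le_integral hIg'
        (Eventually.of_forall (fun w => by positivity))
    have hJnn : (0:ℝ) ≤ J :=
      intervalIntegral.integral_nonneg hRR (fun u _ => by positivity)
    have hBnn : (0:ℝ) ≤ B :=
      intervalIntegral.integral_nonneg hRR (fun u _ => by positivity)
    -- bound on the cross term
    have hTb : -(2*κ) * T ≤ κ ^ 2 * B / 2 + 2 * AR := by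
      have hmono : (∫ w in (-R)..R, (-(2*κ)) * ((w * g w * E w) * deriv g w))
          ≤ ∫ w in (-R)..R, (κ^2/2 * (w ^ 2 * g w ^ 2 * E w) + 2 * (deriv g w ^ 2 * E w)) := by
        apply intervalIntegral.integral_mono_on hRR (iT.const_mul _)
          ((iB.const_mul _).add (iA.const_mul _))
        intro x _
        nlinarith [mul_nonneg (hEpos x).le (sq_nonneg (κ * (x * g x) + 2 * deriv g x)),
          (hEpos x).le]
      rw [intervalIntegral.integral_const_mul,
        intervalIntegral.integral_add (iB.const_mul _) (iA.const_mul _),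
        intervalIntegral.integral_const_mul, intervalIntegral.integral_const_mul] at hmono
      rw [hT, hB, hAR]
      linarith [hmono]
    have eqκ : κ * J + (2 * κ * T + κ ^ 2 * B) = κ * (R * (h R + h (-R))) := by
      rw [← eqmain]; ring
    constructor
    · linarith [hPnn, hPexp, hAle, eqκ]
    · nlinarith [hTb, hAle, eqκ, mul_nonneg hκ.le hJnn]
  -- choose a good sequence of radii
  obtain ⟨Rs, hRs1, hRsTop, hRsS⟩ := exists_boundary_seq (fun r => h r + h (-r))
    (hIg.add hIg.comp_neg) (fun r => add_nonneg (hhnn r) (hhnn (-r)))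
  have hRs0 : ∀ n, (0:ℝ) ≤ Rs n := fun n => le_trans zero_le_one (hRs1 n)
  have hnegtop : Tendsto (fun n => -(Rs n)) atTop atBot :=
    tendsto_neg_atTop_atBot.comp hRsTop
  set A : ℝ := ∫ w, deriv g w ^ 2 * E w with hA
  have hJlim : Tendsto (fun n => ∫ w in (-(Rs n))..(Rs n), g w ^ 2 * E w) atTop
      (nhds (∫ w, g w ^ 2 * E w)) :=
    intervalIntegral_tendsto_integral hIg hnegtop hRsTop
  have hSnn : ∀ n, 0 ≤ Rs n * (h (Rs n) + h (-(Rs n))) :=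
    fun n => mul_nonneg (hRs0 n) (add_nonneg (hhnn _) (hhnn _))
  -- first inequality
  have ineq1 : κ * ∫ w, g w ^ 2 * E w ≤ A := by
    have h1 : Tendsto (fun n => κ * ∫ w in (-(Rs n))..(Rs n), g w ^ 2 * E w) atTop
        (nhds (κ * ∫ w, g w ^ 2 * E w)) := hJlim.const_mul κ
    have h2 : Tendsto (fun n => A + κ * (Rs n * (h (Rs n) + h (-(Rs n))))) atTop
        (nhds (A + κ * 0)) := tendsto_const_nhds.add (hRsS.const_mul κ)
    have := le_of_tendsto_of_tendsto' h1 h2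
      (fun n => (main (Rs n) (hRs0 n)).1)
    simpa using this
  -- integrability of w² g² E
  have hf2cont : Continuous (fun w => w ^ 2 * g w ^ 2 * E w) :=
    ((continuous_pow 2).mul (hgc.pow 2)).mul hEcont
  have hSev : ∀ᶠ n in atTop, Rs n * (h (Rs n) + h (-(Rs n))) < 1 :=
    hRsS.eventually (gt_mem_nhds (by norm_num : (0:ℝ) < 1))
  have hBint : Integrable (fun w => w ^ 2 * g w ^ 2 * E w) := by
    apply integrable_of_intervalIntegral_norm_bounded ((4 * A + 2 * κ) / κ ^ 2)
      (fun n => hf2cont.integrableOn_Ioc) hnegtop hRsTop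
    filter_upwards [hSev] with n hn
    have habs : (fun x => ‖x ^ 2 * g x ^ 2 * E x‖) = fun x => x ^ 2 * g x ^ 2 * E x := by
      funext x
      rw [Real.norm_eq_abs, abs_of_nonneg (by positivity)]
    rw [habs]
    have h2 := (main (Rs n) (hRs0 n)).2
    rw [le_div_iff₀ (by positivity : (0:ℝ) < κ ^ 2)]
    nlinarith [hSnn n, hκ]
  refine ⟨ineq1, hBint, ?_⟩
  -- second inequality
  have hBlim : Tendsto (fun n => ∫ w in (-(Rs n))..(Rs n), w ^ 2 * g w ^ 2 * E w) atTop
      (nhds (∫ w, w ^ 2 * g w ^ 2 * E w)) :=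
    intervalIntegral_tendsto_integral hBint hnegtop hRsTop
  have h1 : Tendsto (fun n => κ ^ 2 * ∫ w in (-(Rs n))..(Rs n), w ^ 2 * g w ^ 2 * E w) atTop
      (nhds (κ ^ 2 * ∫ w, w ^ 2 * g w ^ 2 * E w)) := hBlim.const_mul (κ ^ 2)
  have h2 : Tendsto (fun n => 4 * A + 2 * κ * (Rs n * (h (Rs n) + h (-(Rs n))))) atTop
      (nhds (4 * A + 2 * κ * 0)) := tendsto_const_nhds.add (hRsS.const_mul (2 * κ))
  have := le_of_tendsto_of_tendsto' h1 h2 (fun n => (main (Rs n) (hRs0 n)).2)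
  simpa using this

lemma weightM_fact (ρ κ : ℝ) (v w : ℝ) :
    weightM ρ κ (v, w)
      = (2 * Real.pi / Real.sqrt (ρ * κ) * Real.exp (ρ * v ^ 2 / 2))
          * Real.exp (κ * w ^ 2 / 2) := by
  rw [weightM, mul_assoc, ← Real.exp_add]
  congr 1
  ring

lemma weightM_nonneg (ρ κ : ℝ) (u : ℝ × ℝ) : 0 ≤ weightM ρ κ u := by
  rw [weightM]
  positivity

/-- Poincaré-type inequalities in `L²(m)`: for every `ν` with a (weak)
derivative `∂_w ν` such that `∫ (|ν|² + |∂_w ν|²) m du < ∞`,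
`‖ν‖_{L²(m)} ≤ κ^{-1/2} ‖∂_w ν‖_{L²(m)}` and `‖w ν‖_{L²(m)} ≤ (2/κ) ‖∂_w ν‖_{L²(m)}`. -/
theorem stmt13 (ρ κ : ℝ) (hρ : 0 < ρ) (hκ : 0 < κ) (ν : ℝ → ℝ → ℝ)
    -- `ν` possesses a derivative in `w`
    (hdiff : ∀ v : ℝ, Differentiable ℝ (ν v))
    -- `∫ (|ν|² + |∂_w ν|²) m du < +∞`
    (hL2 : Integrable (fun u : ℝ × ℝ => (ν u.1 u.2) ^ 2 * weightM ρ κ u))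
    (hL2d : Integrable (fun u : ℝ × ℝ => (deriv (ν u.1) u.2) ^ 2 * weightM ρ κ u)) :
    Real.sqrt (∫ u : ℝ × ℝ, (ν u.1 u.2) ^ 2 * weightM ρ κ u)
        ≤ κ ^ (-(1 : ℝ) / 2) *
            Real.sqrt (∫ u : ℝ × ℝ, (deriv (ν u.1) u.2) ^ 2 * weightM ρ κ u)
      ∧ Real.sqrt (∫ u : ℝ × ℝ, (u.2 * ν u.1 u.2) ^ 2 * weightM ρ κ u)
        ≤ (2 / κ) *
            Real.sqrt (∫ u : ℝ × ℝ, (deriv (ν u.1) u.2) ^ 2 * weightM ρ κ u) := by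
  set φ : ℝ → ℝ := fun v => 2 * Real.pi / Real.sqrt (ρ * κ) * Real.exp (ρ * v ^ 2 / 2) with hφ
  have hφpos : ∀ v, 0 < φ v := by
    intro v
    rw [hφ]
    have h1 : 0 < Real.sqrt (ρ * κ) := Real.sqrt_pos.2 (by positivity)
    positivity
  have hfact : ∀ v w : ℝ, weightM ρ κ (v, w) = φ v * Real.exp (κ * w ^ 2 / 2) :=
    fun v w => weightM_fact ρ κ v w
  have hprod : (volume : Measure (ℝ × ℝ)) = (volume : Measure ℝ).prod volume :=
    Measure.volume_eq_prod ℝ ℝ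
  rw [hprod] at hL2 hL2d
  -- a.e. slice facts
  have hae : ∀ᵐ v : ℝ,
      (κ * ∫ w, ν v w ^ 2 * weightM ρ κ (v, w)
          ≤ ∫ w, deriv (ν v) w ^ 2 * weightM ρ κ (v, w)) ∧
      Integrable (fun w => (w * ν v w) ^ 2 * weightM ρ κ (v, w)) ∧
      (κ ^ 2 * ∫ w, (w * ν v w) ^ 2 * weightM ρ κ (v, w)
          ≤ 4 * ∫ w, deriv (ν v) w ^ 2 * weightM ρ κ (v, w)) := by
    filter_upwards [hL2.prod_right_ae, hL2d.prod_right_ae] with v h1 h2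
    have h1' : Integrable (fun w => ν v w ^ 2 * Real.exp (κ * w ^ 2 / 2)) := by
      have e : (fun w => (φ v)⁻¹ * (ν v w ^ 2 * weightM ρ κ (v, w)))
          = fun w => ν v w ^ 2 * Real.exp (κ * w ^ 2 / 2) := by
        funext w
        rw [hfact]
        field_simp
        exact mul_div_cancel_left₀ _ (hφpos v).ne'
      rw [← e]
      exact h1.const_mul _
    have h2' : Integrable (fun w => deriv (ν v) w ^ 2 * Real.exp (κ * w ^ 2 / 2)) := by
      have e : (fun w => (φ v)⁻¹ * (deriv (ν v) w ^ 2 * weightM ρ κ (v, w)))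
          = fun w => deriv (ν v) w ^ 2 * Real.exp (κ * w ^ 2 / 2) := by
        funext w
        rw [hfact]
        field_simp
        exact mul_div_cancel_left₀ _ (hφpos v).ne'
      rw [← e]
      exact h2.const_mul _
    obtain ⟨o1, o2, o3⟩ := oneD hκ (ν v) (hdiff v) h1' h2'
    have E1 : ∫ w, ν v w ^ 2 * weightM ρ κ (v, w)
        = φ v * ∫ w, ν v w ^ 2 * Real.exp (κ * w ^ 2 / 2) := by
      rw [← integral_const_mul]
      congr 1
      funext w
      rw [hfact]
      ring
    have E2 : ∫ w, deriv (ν v) w ^ 2 * weightM ρ κ (v, w)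
        = φ v * ∫ w, deriv (ν v) w ^ 2 * Real.exp (κ * w ^ 2 / 2) := by
      rw [← integral_const_mul]
      congr 1
      funext w
      rw [hfact]
      ring
    have E3 : ∫ w, (w * ν v w) ^ 2 * weightM ρ κ (v, w)
        = φ v * ∫ w, w ^ 2 * ν v w ^ 2 * Real.exp (κ * w ^ 2 / 2) := by
      rw [← integral_const_mul]
      congr 1
      funext w
      rw [hfact]
      ring
    refine ⟨?_, ?_, ?_⟩
    · rw [E1, E2]
      nlinarith [mul_le_mul_of_nonneg_left o1 (hφpos v).le]
    · have e : (fun w => (w * ν v w) ^ 2 * weightM ρ κ (v, w))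
          = fun w => φ v * (w ^ 2 * ν v w ^ 2 * Real.exp (κ * w ^ 2 / 2)) := by
        funext w
        rw [hfact]
        ring
      rw [e]
      exact o2.const_mul _
    · rw [E3, E2]
      nlinarith [mul_le_mul_of_nonneg_left o3 (hφpos v).le]
  -- global integrability of the slice integrals
  have hFg : Integrable (fun v => ∫ w, ν v w ^ 2 * weightM ρ κ (v, w)) := by
    simpa using hL2.integral_prod_left
  have hFd : Integrable (fun v => ∫ w, deriv (ν v) w ^ 2 * weightM ρ κ (v, w)) := by
    simpa using hL2d.integral_prod_left
  have hFdnn : ∀ v, 0 ≤ ∫ w, deriv (ν v) w ^ 2 * weightM ρ κ (v, w) :=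
    fun v => integral_nonneg fun w => mul_nonneg (sq_nonneg _) (weightM_nonneg ρ κ _)
  have hFbnn : ∀ v, 0 ≤ ∫ w, (w * ν v w) ^ 2 * weightM ρ κ (v, w) :=
    fun v => integral_nonneg fun w => mul_nonneg (sq_nonneg _) (weightM_nonneg ρ κ _)
  -- a.e. bound for the second moment slices
  have haebd : ∀ᵐ v : ℝ, ∫ w, (w * ν v w) ^ 2 * weightM ρ κ (v, w)
      ≤ 4 / κ ^ 2 * ∫ w, deriv (ν v) w ^ 2 * weightM ρ κ (v, w) := by
    filter_upwards [hae] with v hv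
    rw [div_mul_eq_mul_div, le_div_iff₀ (by positivity : (0:ℝ) < κ ^ 2)]
    nlinarith [hv.2.2]
  -- integrability of the second moment function on the product
  have hf3aesm : AEStronglyMeasurable (fun u : ℝ × ℝ => (u.2 * ν u.1 u.2) ^ 2 * weightM ρ κ u)
      (volume.prod volume) := by
    have e : (fun u : ℝ × ℝ => (u.2 * ν u.1 u.2) ^ 2 * weightM ρ κ u)
        = fun u : ℝ × ℝ => u.2 ^ 2 * (ν u.1 u.2 ^ 2 * weightM ρ κ u) := by
      funext u
      ring
    rw [e]
    exact ((continuous_snd.pow 2).aestronglyMeasurable).mul hL2.aestronglyMeasurable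
  have hnormint : Integrable (fun v => ∫ w, ‖(w * ν v w) ^ 2 * weightM ρ κ (v, w)‖) := by
    apply Integrable.mono' (hFd.const_mul (4 / κ ^ 2)) (hf3aesm.norm.integral_prod_right')
    filter_upwards [haebd] with v hv
    have habs : (fun w => ‖(w * ν v w) ^ 2 * weightM ρ κ (v, w)‖)
        = fun w => (w * ν v w) ^ 2 * weightM ρ κ (v, w) := by
      funext w
      rw [Real.norm_eq_abs, abs_of_nonneg (mul_nonneg (sq_nonneg _) (weightM_nonneg ρ κ _))]
    rw [habs, Real.norm_eq_abs, abs_of_nonneg (hFbnn v)]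
    exact hv
  have hf3 : Integrable (fun u : ℝ × ℝ => (u.2 * ν u.1 u.2) ^ 2 * weightM ρ κ u)
      (volume.prod volume) := by
    refine (integrable_prod_iff hf3aesm).2 ⟨?_, hnormint⟩
    filter_upwards [hae] with v hv
    exact hv.2.1
  have hFb : Integrable (fun v => ∫ w, (w * ν v w) ^ 2 * weightM ρ κ (v, w)) := by
    simpa using hf3.integral_prod_left
  -- rewrite the product integrals as iterated integrals
  have EJ : (∫ u : ℝ × ℝ, ν u.1 u.2 ^ 2 * weightM ρ κ u)
      = ∫ v, ∫ w, ν v w ^ 2 * weightM ρ κ (v, w) := by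
    rw [hprod, integral_prod _ hL2]
  have EA : (∫ u : ℝ × ℝ, deriv (ν u.1) u.2 ^ 2 * weightM ρ κ u)
      = ∫ v, ∫ w, deriv (ν v) w ^ 2 * weightM ρ κ (v, w) := by
    rw [hprod, integral_prod _ hL2d]
  have EB : (∫ u : ℝ × ℝ, (u.2 * ν u.1 u.2) ^ 2 * weightM ρ κ u)
      = ∫ v, ∫ w, (w * ν v w) ^ 2 * weightM ρ κ (v, w) := by
    rw [hprod, integral_prod _ hf3]
  rw [EJ, EA, EB]
  set J2 : ℝ := ∫ v, ∫ w, ν v w ^ 2 * weightM ρ κ (v, w) with hJ2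
  set A2 : ℝ := ∫ v, ∫ w, deriv (ν v) w ^ 2 * weightM ρ κ (v, w) with hA2
  set B2 : ℝ := ∫ v, ∫ w, (w * ν v w) ^ 2 * weightM ρ κ (v, w) with hB2
  have hA2nn : 0 ≤ A2 := integral_nonneg fun v => hFdnn v
  -- the two key inequalities at the level of iterated integrals
  have key1 : κ * J2 ≤ A2 := by
    have h1 : ∫ v, κ * ∫ w, ν v w ^ 2 * weightM ρ κ (v, w) ≤ A2 := by
      apply integral_mono_ae (hFg.const_mul κ) hFd
      filter_upwards [hae] with v hv
      exact hv.1
    rwa [integral_const_mul] at h1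
  have key2 : B2 ≤ 4 / κ ^ 2 * A2 := by
    have h1 : B2 ≤ ∫ v, 4 / κ ^ 2 * ∫ w, deriv (ν v) w ^ 2 * weightM ρ κ (v, w) := by
      apply integral_mono_ae hFb (hFd.const_mul _) haebd
    rwa [integral_const_mul] at h1
  constructor
  · have hJle : J2 ≤ κ⁻¹ * A2 := by
      calc J2 = κ⁻¹ * (κ * J2) := by field_simp
        _ ≤ κ⁻¹ * A2 := mul_le_mul_of_nonneg_left key1 (by positivity)
    calc Real.sqrt J2 ≤ Real.sqrt (κ⁻¹ * A2) := Real.sqrt_le_sqrt hJle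
      _ = Real.sqrt κ⁻¹ * Real.sqrt A2 := Real.sqrt_mul (by positivity) _
      _ = κ ^ (-(1:ℝ)/2) * Real.sqrt A2 := by
          rw [show (-(1:ℝ)/2) = -(1/2 : ℝ) by ring, Real.rpow_neg hκ.le,
            Real.sqrt_inv, Real.sqrt_eq_rpow]
  · calc Real.sqrt B2 ≤ Real.sqrt (4 / κ ^ 2 * A2) := Real.sqrt_le_sqrt key2
      _ = Real.sqrt (4 / κ ^ 2) * Real.sqrt A2 := Real.sqrt_mul (by positivity) _
      _ = 2 / κ * Real.sqrt A2 := by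
          rw [show (4 / κ ^ 2 : ℝ) = (2 / κ) ^ 2 by ring, Real.sqrt_sq (by positivity)]
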